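/- arXiv:2405.16698 — 4 statements merged into one kernel-verified Lean document; each statement's English description precedes it below -/
import Mathlib

section
/- Let N ≥ 1, let Q > 0 be real, and let p_1, …, p_N ∈ ℝ⁴ with components p_k = (p_{0k}, p_{1k}, p_{2k}, p_{3k}) satisfy: (i) each p_k is massless, p_{0k}² = p_{1k}² + p_{2k}² + p_{3k}²; (ii) p_{0k} − p_{3k} > 0 for each k; (iii) Σ_k p_k = (Q, 0, 0, 0). Define u_k = sqrt((p_{0k} − p_{3k})/Q) ∈ ℝ and v_k = (p_{1k} + i·p_{2k}) / sqrt(Q·(p_{0k} − p_{3k})) ∈ ℂ. Then Σ_k u_k² = 1, Σ_k |v_k|² = 1, and Σ_k u_k · v_k = 0. -/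
/-- The spinor-derived coordinates u and v on massless N-body phase space in the
center-of-mass frame are unit vectors and orthogonal. -/
theorem phase_space_coords_CM (N : ℕ) (hN : 1 ≤ N) (Q : ℝ) (hQ : 0 < Q)
    (p0 p1 p2 p3 : Fin N → ℝ)
    (hmass : ∀ k, (p0 k) ^ 2 = (p1 k) ^ 2 + (p2 k) ^ 2 + (p3 k) ^ 2)
    (hpos : ∀ k, 0 < p0 k - p3 k)
    (hsum0 : ∑ k, p0 k = Q) (hsum1 : ∑ k, p1 k = 0)
    (hsum2 : ∑ k, p2 k = 0) (hsum3 : ∑ k, p3 k = 0) :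
    (∑ k, (Real.sqrt ((p0 k - p3 k) / Q)) ^ 2 = 1) ∧
    (∑ k, ‖((p1 k : ℂ) + (p2 k : ℂ) * Complex.I) /
        ((Real.sqrt (Q * (p0 k - p3 k)) : ℝ) : ℂ)‖ ^ 2 = 1) ∧
    (∑ k, ((Real.sqrt ((p0 k - p3 k) / Q) : ℝ) : ℂ) *
        (((p1 k : ℂ) + (p2 k : ℂ) * Complex.I) /
          ((Real.sqrt (Q * (p0 k - p3 k)) : ℝ) : ℂ)) = 0) := by
  refine ⟨?_, ?_, ?_⟩
  · have : ∀ k, (Real.sqrt ((p0 k - p3 k) / Q)) ^ 2 = (p0 k - p3 k) / Q := by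
      intro k
      exact Real.sq_sqrt (div_nonneg (hpos k).le hQ.le)
    simp only [this]
    rw [← Finset.sum_div, Finset.sum_sub_distrib, hsum0, hsum3, sub_zero,
      div_self hQ.ne']
  · have : ∀ k, ‖((p1 k : ℂ) + (p2 k : ℂ) * Complex.I) /
        ((Real.sqrt (Q * (p0 k - p3 k)) : ℝ) : ℂ)‖ ^ 2 = (p0 k + p3 k) / Q := by
      intro k
      have hq : 0 < Q * (p0 k - p3 k) := mul_pos hQ (hpos k)
      rw [norm_div, div_pow, Complex.sq_norm, Complex.normSq_add_mul_I,
        Complex.norm_real, Real.norm_eq_abs, sq_abs, Real.sq_sqrt hq.le]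
      have h12 : p1 k ^ 2 + p2 k ^ 2 = (p0 k + p3 k) * (p0 k - p3 k) := by
        have := hmass k; ring_nf; nlinarith [hmass k]
      rw [h12, mul_comm (p0 k + p3 k), mul_comm Q (p0 k - p3 k), mul_div_mul_left _ _ (hpos k).ne']
    simp only [this]
    rw [← Finset.sum_div, Finset.sum_add_distrib, hsum0, hsum3, add_zero,
      div_self hQ.ne']
  · have : ∀ k, ((Real.sqrt ((p0 k - p3 k) / Q) : ℝ) : ℂ) *
        (((p1 k : ℂ) + (p2 k : ℂ) * Complex.I) /
          ((Real.sqrt (Q * (p0 k - p3 k)) : ℝ) : ℂ)) =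
        ((p1 k : ℂ) + (p2 k : ℂ) * Complex.I) / (Q : ℂ) := by
      intro k
      have h1 : Real.sqrt ((p0 k - p3 k) / Q) = Real.sqrt (p0 k - p3 k) / Real.sqrt Q :=
        Real.sqrt_div (hpos k).le Q
      have h2 : Real.sqrt (Q * (p0 k - p3 k)) = Real.sqrt Q * Real.sqrt (p0 k - p3 k) :=
        Real.sqrt_mul hQ.le _
      have hsq : Real.sqrt Q ≠ 0 := (Real.sqrt_pos.mpr hQ).ne'
      have hsp : Real.sqrt (p0 k - p3 k) ≠ 0 := (Real.sqrt_pos.mpr (hpos k)).ne'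
      have hQ2 : (Real.sqrt Q) * Real.sqrt Q = Q := Real.mul_self_sqrt hQ.le
      rw [h1, h2]
      have hqc : ((Real.sqrt Q : ℝ) : ℂ) ≠ 0 := by exact_mod_cast hsq
      have hpc : ((Real.sqrt (p0 k - p3 k) : ℝ) : ℂ) ≠ 0 := by exact_mod_cast hsp
      have hQc : ((Real.sqrt Q : ℝ) : ℂ) * ((Real.sqrt Q : ℝ) : ℂ) = (Q : ℂ) := by
        exact_mod_cast hQ2
      have hQne : (Q : ℂ) ≠ 0 := by exact_mod_cast hQ.ne'
      push_cast
      field_simp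
      linear_combination (-1 : ℂ) * ((p1 k : ℂ) + (p2 k : ℂ) * Complex.I) * hQc
    simp only [this]
    rw [← Finset.sum_div, div_eq_zero_iff]
    left
    rw [Finset.sum_add_distrib, ← Finset.sum_mul]
    norm_cast
    simp [hsum1, hsum2]
end

section
/- Let n ≥ 1, let w ∈ (0,1) be real, and let u ∈ ℝⁿ satisfy Σ_{i=1}^n u_i² = 1 − w². Define the n×n real matrix A by A_{ij} = (1/w)·(u_i·u_j/(1+w) + w·δ_{ij}). Then for every v ∈ ℂⁿ, writing v_N = −(1/w)·Σ_{i=1}^n u_i·v_i, one has Σ_{k=1}^n |(A v)_k|² = Σ_{i=1}^n |v_i|² + |v_N|², where (A v)_k = Σ_j A_{kj} v_j. -/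
/-- The change-of-variables matrix A maps the constrained vector v to a vector v' whose
squared norm equals |v|² + |v_N|², where v_N is fixed by the orthogonality constraint. -/
theorem change_of_vars_norm (n : ℕ) (hn : 1 ≤ n) (w : ℝ) (hw : w ∈ Set.Ioo (0 : ℝ) 1)
    (u : Fin n → ℝ) (hu : ∑ i, (u i) ^ 2 = 1 - w ^ 2)
    (A : Matrix (Fin n) (Fin n) ℝ)
    (hA : ∀ i j, A i j = (1 / w) * (u i * u j / (1 + w) + w * (if i = j then 1 else 0)))
    (v : Fin n → ℂ) (vN : ℂ)
    (hvN : vN = -(1 / (w : ℂ)) * ∑ i, (u i : ℂ) * v i) :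
    ∑ k, ‖∑ j, ((A k j : ℝ) : ℂ) * v j‖ ^ 2
      = (∑ i, ‖v i‖ ^ 2) + ‖vN‖ ^ 2 := by
  obtain ⟨hw0, hw1⟩ := hw
  have hwne : w ≠ 0 := ne_of_gt hw0
  have hw1ne : 1 + w ≠ 0 := by positivity
  set S : ℂ := ∑ i, (u i : ℂ) * v i with hS
  set c : ℝ := 1 / (w * (1 + w)) with hc
  have hAv : ∀ k, (∑ j, ((A k j : ℝ) : ℂ) * v j)
      = v k + ((c : ℝ) : ℂ) * (u k : ℂ) * S := by
    intro k
    have : ∀ j, ((A k j : ℝ) : ℂ) * v j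
        = ((c : ℝ) : ℂ) * (u k : ℂ) * ((u j : ℂ) * v j)
          + (if k = j then v j else 0) := by
      intro j
      rw [hA]
      push_cast
      have hwc : (w : ℂ) ≠ 0 := by exact_mod_cast Complex.ofReal_ne_zero.mpr hwne
      have h1wc : (1 : ℂ) + (w : ℂ) ≠ 0 := by
        exact_mod_cast Complex.ofReal_ne_zero.mpr hw1ne
      by_cases h : k = j <;> simp [h, hc] <;> field_simp <;> ring
    rw [Finset.sum_congr rfl fun j _ => this j, Finset.sum_add_distrib,
      Finset.sum_ite_eq Finset.univ k v, if_pos (Finset.mem_univ k),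
      ← Finset.mul_sum, ← hS]
    ring
  have hre : ∑ k, u k * (v k).re = S.re := by
    rw [hS, Complex.re_sum]
    exact Finset.sum_congr rfl fun k _ => by simp [Complex.mul_re]
  have him : ∑ k, u k * (v k).im = S.im := by
    rw [hS, Complex.im_sum]
    exact Finset.sum_congr rfl fun k _ => by simp [Complex.mul_im]
  simp only [Complex.sq_norm, hAv]
  have key : ∀ k, Complex.normSq (v k + ((c : ℝ) : ℂ) * (u k : ℂ) * S)
      = Complex.normSq (v k) + 2 * c * S.re * (u k * (v k).re)
        + 2 * c * S.im * (u k * (v k).im)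
        + c ^ 2 * (S.re ^ 2 + S.im ^ 2) * (u k) ^ 2 := by
    intro k
    simp only [Complex.normSq_apply, Complex.add_re, Complex.add_im,
      Complex.mul_re, Complex.mul_im, Complex.ofReal_re, Complex.ofReal_im]
    ring
  rw [Finset.sum_congr rfl fun k _ => key k]
  simp only [Finset.sum_add_distrib, ← Finset.mul_sum, hre, him, hu]
  have hvN2 : Complex.normSq vN = (S.re ^ 2 + S.im ^ 2) / w ^ 2 := by
    rw [hvN]
    simp [Complex.normSq_mul, Complex.normSq_apply]
    field_simp
  rw [hvN2]
  have : 2 * c * S.re * S.re + 2 * c * S.im * S.im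
      + c ^ 2 * (S.re ^ 2 + S.im ^ 2) * (1 - w ^ 2)
      = (S.re ^ 2 + S.im ^ 2) / w ^ 2 := by
    rw [hc]
    field_simp
    ring
  linarith [this]
end

section
/- Let n ≥ 1 and let a, b, c be unit vectors in the complex inner product space ℂⁿ (EuclideanSpace ℂ (Fin n)) with inner product ⟨·,·⟩. Then Real.arccos(|⟨a,c⟩|) ≤ Real.arccos(|⟨a,b⟩|) + Real.arccos(|⟨b,c⟩|). -/
open Real

private lemma proj_norm_sq {n : ℕ} (u b : EuclideanSpace ℂ (Fin n))
    (hu : ‖u‖ = 1) (hb : ‖b‖ = 1) :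
    ‖u - (inner ℂ b u : ℂ) • b‖ ^ 2 = 1 - (‖(inner ℂ b u : ℂ)‖) ^ 2 := by
  have h1 : ‖u - (inner ℂ b u : ℂ) • b‖ ^ 2 =
      ‖u‖ ^ 2 - 2 * Complex.re (inner ℂ u ((inner ℂ b u : ℂ) • b)) +
        ‖(inner ℂ b u : ℂ) • b‖ ^ 2 := norm_sub_sq (𝕜 := ℂ) u _
  have h2 : (inner ℂ u ((inner ℂ b u : ℂ) • b) : ℂ).re = (‖(inner ℂ b u : ℂ)‖) ^ 2 := by
    rw [inner_smul_right, ← inner_conj_symm u b, Complex.mul_conj]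
    simp [Complex.normSq_eq_norm_sq, ← Complex.ofReal_pow]
  have h4 : ‖(inner ℂ b u : ℂ) • b‖ = ‖(inner ℂ b u : ℂ)‖ := by
    rw [norm_smul, hb, mul_one]
  rw [h1, h2, h4, hu]
  ring

/-- Triangle inequality for the Fubini–Study distance arccos|⟨·,·⟩| between unit
vectors of ℂⁿ. -/
theorem arccos_abs_inner_triangle (n : ℕ) (hn : 1 ≤ n)
    (a b c : EuclideanSpace ℂ (Fin n))
    (ha : ‖a‖ = 1) (hb : ‖b‖ = 1) (hc : ‖c‖ = 1) :
    Real.arccos (‖(inner ℂ a c : ℂ)‖) ≤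
      Real.arccos (‖(inner ℂ a b : ℂ)‖) + Real.arccos (‖(inner ℂ b c : ℂ)‖) := by
  set x := ‖(inner ℂ a b : ℂ)‖ with hxdef
  set y := ‖(inner ℂ b c : ℂ)‖ with hydef
  set z := ‖(inner ℂ a c : ℂ)‖ with hzdef
  have hx0 : 0 ≤ x := norm_nonneg _
  have hy0 : 0 ≤ y := norm_nonneg _
  have hz0 : 0 ≤ z := norm_nonneg _
  have hx1 : x ≤ 1 := by
    have := norm_inner_le_norm (𝕜 := ℂ) a b
    simpa [ha, hb] using this
  have hy1 : y ≤ 1 := by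
    have := norm_inner_le_norm (𝕜 := ℂ) b c
    simpa [hb, hc] using this
  set a' : EuclideanSpace ℂ (Fin n) := a - (inner ℂ b a : ℂ) • b with ha'
  set c' : EuclideanSpace ℂ (Fin n) := c - (inner ℂ b c : ℂ) • b with hc'
  have hbb : (inner ℂ b b : ℂ) = 1 := by
    rw [inner_self_eq_norm_sq_to_K, hb]; norm_num
  have hdecomp : (inner ℂ a c : ℂ) = inner ℂ a b * inner ℂ b c + inner ℂ a' c' := by
    simp only [ha', hc', inner_sub_left, inner_sub_right, inner_smul_left, inner_smul_right, hbb,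
      mul_one, inner_conj_symm]
    ring
  have habs_ba : ‖(inner ℂ b a : ℂ)‖ = x := by
    rw [hxdef, ← inner_conj_symm b a, Complex.norm_conj]
  have hna : ‖a'‖ = Real.sqrt (1 - x ^ 2) := by
    have := proj_norm_sq a b ha hb
    rw [habs_ba] at this
    rw [← this, Real.sqrt_sq (norm_nonneg _)]
  have hnc : ‖c'‖ = Real.sqrt (1 - y ^ 2) := by
    have := proj_norm_sq c b hc hb
    rw [← hydef] at this
    rw [← this, Real.sqrt_sq (norm_nonneg _)]
  have hkey : x * y - Real.sqrt (1 - x ^ 2) * Real.sqrt (1 - y ^ 2) ≤ z := by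
    have h5 : x * y ≤ z + ‖(inner ℂ a' c' : ℂ)‖ := by
      have : ((inner ℂ a b : ℂ) * (inner ℂ b c : ℂ)) = (inner ℂ a c : ℂ) - (inner ℂ a' c' : ℂ) := by
        rw [hdecomp]; ring
      calc x * y = ‖(inner ℂ a b : ℂ) * (inner ℂ b c : ℂ)‖ := (norm_mul _ _).symm
        _ = ‖(inner ℂ a c : ℂ) - (inner ℂ a' c' : ℂ)‖ := by rw [this]
        _ ≤ z + ‖(inner ℂ a' c' : ℂ)‖ := by
            simpa [hzdef] using
              norm_sub_le (inner ℂ a c : ℂ) (inner ℂ a' c' : ℂ)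
    have h6 : ‖(inner ℂ a' c' : ℂ)‖ ≤
        Real.sqrt (1 - x ^ 2) * Real.sqrt (1 - y ^ 2) := by
      have := norm_inner_le_norm (𝕜 := ℂ) a' c'
      rw [hna, hnc] at this
      simpa using this
    linarith
  have hcos : Real.cos (Real.arccos x + Real.arccos y) ≤ z := by
    rw [Real.cos_add, Real.cos_arccos (by linarith) hx1, Real.cos_arccos (by linarith) hy1,
      Real.sin_arccos, Real.sin_arccos]
    exact hkey
  calc Real.arccos z ≤ Real.arccos (Real.cos (Real.arccos x + Real.arccos y)) := by
        unfold Real.arccos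
        exact sub_le_sub_left (Real.monotone_arcsin hcos) _
    _ = Real.arccos x + Real.arccos y := Real.arccos_cos
        (add_nonneg (Real.arccos_nonneg _) (Real.arccos_nonneg _))
        (by
          have h1 : Real.arccos x ≤ π / 2 := Real.arccos_le_pi_div_two.2 hx0
          have h2 : Real.arccos y ≤ π / 2 := Real.arccos_le_pi_div_two.2 hy0
          linarith)
end

section
/- Let n ≥ 1 and let a, b be unit vectors in the complex inner product space ℂⁿ (EuclideanSpace ℂ (Fin n)). Define d(a,b) = Real.arccos(max(|⟨a,b⟩|, |⟨a, conj b⟩|)), where conj b denotes componentwise complex conjugation. Then d is symmetric, d(a,a) = 0, and d satisfies the triangle inequality: d(a,c) ≤ d(a,b) + d(b,c) for all unit vectors a, b, c. -/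
open scoped ComplexConjugate

variable {E : Type*} [NormedAddCommGroup E] [InnerProductSpace ℂ E]

local notation "⟪" x ", " y "⟫" => @inner ℂ _ _ x y

lemma key_ineq (a b c : E) (ha : ‖a‖ = 1) (hb : ‖b‖ = 1) (hc : ‖c‖ = 1) :
    ‖⟪a,b⟫‖ * ‖⟪b,c⟫‖ -
      Real.sqrt (1 - ‖⟪a,b⟫‖ ^ 2) * Real.sqrt (1 - ‖⟪b,c⟫‖ ^ 2) ≤ ‖⟪a,c⟫‖ := by
  set α : ℂ := ⟪b,a⟫ with hα
  set β : ℂ := ⟪b,c⟫ with hβ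
  set u : E := a - α • b with hu
  set w : E := c - β • b with hw
  have hbb : ⟪b,b⟫ = 1 := by
    rw [inner_self_eq_norm_sq_to_K, hb]; norm_num
  have hab : ⟪a,b⟫ = conj α := by rw [hα, ← inner_conj_symm]
  have huw : ⟪u,w⟫ = ⟪a,c⟫ - conj α * β := by
    simp only [hu, hw, inner_sub_left, inner_sub_right, inner_smul_left, inner_smul_right,
      hbb, mul_one, hab]
    ring
  have hcb : ⟪c,b⟫ = conj β := by rw [hβ, ← inner_conj_symm]
  have hu2 : (‖u‖ : ℝ) ^ 2 = 1 - ‖α‖ ^ 2 := by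
    rw [hu, @norm_sub_sq ℂ, ha, norm_smul, hb, inner_smul_right, hab]
    simp [Complex.mul_conj, Complex.normSq_eq_norm_sq,
      ← Complex.ofReal_pow]
    ring
  have hw2 : (‖w‖ : ℝ) ^ 2 = 1 - ‖β‖ ^ 2 := by
    rw [hw, @norm_sub_sq ℂ, hc, norm_smul, hb, inner_smul_right, hcb]
    simp [Complex.mul_conj, Complex.normSq_eq_norm_sq,
      ← Complex.ofReal_pow]
    ring
  have hsab : ‖⟪a,b⟫‖ = ‖α‖ := by rw [hab, RingHomIsometric.norm_map]
  have hnu : ‖u‖ = Real.sqrt (1 - ‖α‖ ^ 2) := by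
    rw [← hu2, Real.sqrt_sq (norm_nonneg u)]
  have hnw : ‖w‖ = Real.sqrt (1 - ‖β‖ ^ 2) := by
    rw [← hw2, Real.sqrt_sq (norm_nonneg w)]
  have hcs : ‖⟪u,w⟫‖ ≤ Real.sqrt (1 - ‖α‖ ^ 2) * Real.sqrt (1 - ‖β‖ ^ 2) := by
    rw [← hnu, ← hnw]; exact norm_inner_le_norm u w
  have hdecomp : ⟪a,c⟫ = conj α * β + ⟪u,w⟫ := by rw [huw]; ring
  have h1 : ‖α‖ * ‖β‖ - ‖⟪u,w⟫‖ ≤ ‖⟪a,c⟫‖ := by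
    have := norm_sub_norm_le (conj α * β) (-⟪u,w⟫)
    simp only [norm_neg, sub_neg_eq_add, ← hdecomp] at this
    calc ‖α‖ * ‖β‖ - ‖⟪u,w⟫‖ = ‖conj α * β‖ - ‖⟪u,w⟫‖ := by
          rw [norm_mul, RingHomIsometric.norm_map]
      _ ≤ ‖⟪a,c⟫‖ := this
  rw [hsab, hβ] at *
  linarith

lemma arccos_triangle (a b c : E) (ha : ‖a‖ = 1) (hb : ‖b‖ = 1) (hc : ‖c‖ = 1) :
    Real.arccos ‖⟪a,c⟫‖ ≤ Real.arccos ‖⟪a,b⟫‖ + Real.arccos ‖⟪b,c⟫‖ := by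
  set s := ‖⟪a,b⟫‖
  set t := ‖⟪b,c⟫‖
  set r := ‖⟪a,c⟫‖
  have hs0 : 0 ≤ s := norm_nonneg _
  have ht0 : 0 ≤ t := norm_nonneg _
  have hr0 : 0 ≤ r := norm_nonneg _
  have hs1 : s ≤ 1 := by
    have := norm_inner_le_norm (𝕜 := ℂ) a b; rwa [ha, hb, one_mul] at this
  have ht1 : t ≤ 1 := by
    have := norm_inner_le_norm (𝕜 := ℂ) b c; rwa [hb, hc, one_mul] at this
  have hr1 : r ≤ 1 := by
    have := norm_inner_le_norm (𝕜 := ℂ) a c; rwa [ha, hc, one_mul] at this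
  have key := key_ineq a b c ha hb hc
  set θ := Real.arccos s + Real.arccos t with hθ
  have hθ0 : 0 ≤ θ := add_nonneg (Real.arccos_nonneg _) (Real.arccos_nonneg _)
  by_cases hπ : θ ≤ Real.pi
  · have hcosθ : Real.cos θ = s * t - Real.sqrt (1 - s ^ 2) * Real.sqrt (1 - t ^ 2) := by
      rw [hθ, Real.cos_add, Real.cos_arccos (by linarith) hs1, Real.cos_arccos (by linarith) ht1,
        Real.sin_arccos, Real.sin_arccos]
    have h1 : Real.cos θ ≤ r := by rw [hcosθ]; exact key
    calc Real.arccos r ≤ Real.arccos (Real.cos θ) := by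
          have : Antitone Real.arccos := fun x y h => by
            unfold Real.arccos; linarith [Real.monotone_arcsin h]
          exact this h1
      _ = θ := Real.arccos_cos hθ0 hπ
  · push_neg at hπ
    linarith [Real.arccos_le_pi r]

/-- Componentwise complex conjugation of a vector in ℂⁿ (the action of the azimuthal
reflection p_y → -p_y on the hypersphere coordinates). -/
noncomputable def conjVec (n : ℕ) (b : EuclideanSpace ℂ (Fin n)) : EuclideanSpace ℂ (Fin n) :=
  WithLp.toLp 2 (fun i => (starRingEnd ℂ) (b i))

/-- The hypersphere distance minimized over azimuthal rotations and reflections. -/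
noncomputable def hsDist (n : ℕ) (a b : EuclideanSpace ℂ (Fin n)) : ℝ :=
  Real.arccos (max (‖(inner ℂ a b : ℂ)‖) (‖(inner ℂ a (conjVec n b) : ℂ)‖))

lemma arccos_antitone : Antitone Real.arccos := fun x y h => by
  unfold Real.arccos; linarith [Real.monotone_arcsin h]

lemma conjVec_conjVec (n : ℕ) (b : EuclideanSpace ℂ (Fin n)) :
    conjVec n (conjVec n b) = b := by
  ext i; simp [conjVec]

lemma norm_conjVec (n : ℕ) (b : EuclideanSpace ℂ (Fin n)) : ‖conjVec n b‖ = ‖b‖ := by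
  simp [EuclideanSpace.norm_eq, conjVec]

lemma inner_conjVec_conjVec (n : ℕ) (a b : EuclideanSpace ℂ (Fin n)) :
    (inner ℂ (conjVec n a) (conjVec n b) : ℂ) = conj (inner ℂ a b : ℂ) := by
  simp [PiLp.inner_apply, RCLike.inner_apply, conjVec, map_sum, mul_comm]

lemma inner_conjVec_left (n : ℕ) (a b : EuclideanSpace ℂ (Fin n)) :
    (inner ℂ (conjVec n a) b : ℂ) = conj (inner ℂ a (conjVec n b) : ℂ) := by
  have := inner_conjVec_conjVec n a (conjVec n b)
  rwa [conjVec_conjVec] at this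

lemma inner_conjVec_symm (n : ℕ) (a b : EuclideanSpace ℂ (Fin n)) :
    (inner ℂ a (conjVec n b) : ℂ) = (inner ℂ b (conjVec n a) : ℂ) := by
  calc (inner ℂ a (conjVec n b) : ℂ) = conj (inner ℂ (conjVec n b) a : ℂ) :=
        (inner_conj_symm _ _).symm
    _ = conj (conj (inner ℂ b (conjVec n a) : ℂ)) := by rw [inner_conjVec_left]
    _ = _ := Complex.conj_conj _

lemma hsDist_eq_min (n : ℕ) (a b : EuclideanSpace ℂ (Fin n)) :
    hsDist n a b = min (Real.arccos ‖(inner ℂ a b : ℂ)‖)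
      (Real.arccos ‖(inner ℂ a (conjVec n b) : ℂ)‖) := by
  rw [hsDist, arccos_antitone.map_max]

/-- The reflection-and-phase minimized hypersphere distance is symmetric, vanishes on the
diagonal, and satisfies the triangle inequality on unit vectors. -/
theorem hsDist_is_metric (n : ℕ) (hn : 1 ≤ n) :
    (∀ a b : EuclideanSpace ℂ (Fin n), ‖a‖ = 1 → ‖b‖ = 1 → hsDist n a b = hsDist n b a) ∧
    (∀ a : EuclideanSpace ℂ (Fin n), ‖a‖ = 1 → hsDist n a a = 0) ∧
    (∀ a b c : EuclideanSpace ℂ (Fin n), ‖a‖ = 1 → ‖b‖ = 1 → ‖c‖ = 1 →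
      hsDist n a c ≤ hsDist n a b + hsDist n b c) := by
  refine ⟨?_, ?_, ?_⟩
  · intro a b _ _
    rw [hsDist_eq_min, hsDist_eq_min, norm_inner_symm, inner_conjVec_symm]
  · intro a ha
    rw [hsDist_eq_min]
    have h1 : (inner ℂ a a : ℂ) = 1 := by
      rw [inner_self_eq_norm_sq_to_K, ha]; norm_num
    have h2 : Real.arccos ‖(inner ℂ a a : ℂ)‖ = 0 := by rw [h1]; simp [Real.arccos_one]
    have h3 : 0 ≤ Real.arccos ‖(inner ℂ a (conjVec n a) : ℂ)‖ := Real.arccos_nonneg _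
    rw [min_def]
    split <;> [exact h2; linarith]
  · intro a b c ha hb hc
    have hb' : ‖conjVec n b‖ = 1 := by rw [norm_conjVec, hb]
    have hc' : ‖conjVec n c‖ = 1 := by rw [norm_conjVec, hc]
    set D : EuclideanSpace ℂ (Fin n) → EuclideanSpace ℂ (Fin n) → ℝ :=
      fun x y => Real.arccos ‖(inner ℂ x y : ℂ)‖ with hD
    have T1 : D a c ≤ D a b + D b c := arccos_triangle a b c ha hb hc
    have T2 : D a (conjVec n c) ≤ D a b + D b (conjVec n c) :=
      arccos_triangle a b (conjVec n c) ha hb hc'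
    have Ebc : Real.arccos ‖(inner ℂ (conjVec n b) (conjVec n c) : ℂ)‖ = D b c := by
      simp only [hD, inner_conjVec_conjVec]
      rw [RCLike.norm_conj]
    have Ebc' : Real.arccos ‖(inner ℂ (conjVec n b) c : ℂ)‖ = D b (conjVec n c) := by
      simp only [hD, inner_conjVec_left]
      rw [RCLike.norm_conj]
    have T3 : D a (conjVec n c) ≤ D a (conjVec n b) + D b c := by
      have := arccos_triangle a (conjVec n b) (conjVec n c) ha hb' hc'
      rwa [Ebc] at this
    have T4 : D a c ≤ D a (conjVec n b) + D b (conjVec n c) := by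
      have := arccos_triangle a (conjVec n b) c ha hb' hc
      rwa [Ebc'] at this
    rw [hsDist_eq_min, hsDist_eq_min, hsDist_eq_min]
    rcases le_total (D a b) (D a (conjVec n b)) with h1 | h1
    · rw [min_eq_left h1]
      rcases le_total (D b c) (D b (conjVec n c)) with h2 | h2
      · rw [min_eq_left h2]; exact le_trans (min_le_left _ _) T1
      · rw [min_eq_right h2]; exact le_trans (min_le_right _ _) T2
    · rw [min_eq_right h1]
      rcases le_total (D b c) (D b (conjVec n c)) with h2 | h2
      · rw [min_eq_left h2]; exact le_trans (min_le_right _ _) T3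
      · rw [min_eq_right h2]; exact le_trans (min_le_left _ _) T4
end
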